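/- Let p, q be positive integers, Q₀ = p·q, n ≥ 1, ε ∈ (0, 1/2), and r > 0 with ρ_{q/r}(ℤⁿ) ≤ 1 + ε (i.e. r ≥ η_ε(q·ℤⁿ)). Identify ℤ_{Q₀} and ℤ_p with their sets of centered integer representatives. Define two probability distributions on triples (x′, u′, e) ∈ ℤⁿ × ℤ_{Q₀}ⁿ × ℤ_pⁿ: (Distribution 1) sample u′ uniformly from ℤ_{Q₀}ⁿ; let e ∈ ℤ_pⁿ be the unique vector with u′ − e ∈ p·ℤⁿ, let c = (u′ − e)/p, and sample x′ from the discrete Gaussian D_{q·ℤⁿ + c, r}; (Distribution 2) sample e uniformly from ℤ_pⁿ, sample x′ from D_{ℤⁿ, r}, and set u′ = e + p·x′ mod Q₀. Then the two distributions have the same support {(x′, u′, e) : u′ = e + p·x′ mod Q₀}, and for every triple in this support the probability assigned by Distribution 1 lies in the interval [(1−ε)/(1+ε), (1+ε)/(1−ε)] times the probability assigned by Distribution 2. In particular Distribution 1 assigns the triple probability Q₀^{−n}·ρ_r(x′)/ρ_r(q·ℤⁿ + c) and Distribution 2 assigns it probability (qⁿ/Q₀ⁿ)·ρ_r(x′)/ρ_r(ℤⁿ).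 -/

import Mathlib

set_option maxHeartbeats 1000000


open Classical

/-- The Gaussian function of width `s`: `ρ_s(x) = exp(-π ‖x‖² / s²)`. -/
noncomputable def gaussF (n : ℕ) (s : ℝ) (x : Fin n → ℝ) : ℝ :=
  Real.exp (-Real.pi * (∑ i, x i ^ 2) / s ^ 2)

/-- Gaussian mass `ρ_s(ℤⁿ)`. -/
noncomputable def rhoZn (n : ℕ) (s : ℝ) : ℝ :=
  ∑' z : Fin n → ℤ, gaussF n s (fun i => (z i : ℝ))

/-- Gaussian mass `ρ_s(q·ℤⁿ + c)` of a coset of `q·ℤⁿ`. -/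
noncomputable def rhoCoset (n : ℕ) (s : ℝ) (q : ℤ) (c : Fin n → ℤ) : ℝ :=
  ∑' z : Fin n → ℤ, gaussF n s (fun i => ((q * z i + c i : ℤ) : ℝ))

/-- Distribution 1 of the semi-random gadget sampler (for `P = p·I`, `Q = q·I`,
`Q₀ = p·q`): sample `u'` uniformly from the centered representatives `ℤ_{Q₀}ⁿ`
(probability `Q₀^{-n}` each), let `e` be the centered residue of `u'` mod `p`,
let `c = (u'-e)/p`, and sample `x'` from the discrete Gaussian `D_{q·ℤⁿ+c, r}`.
The resulting probability of the triple `(x', u', e)`. -/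

noncomputable def Dist1 (n p q Q₀ : ℕ) (r : ℝ) (x' u' e : Fin n → ℤ) : ℝ :=
  if (∀ i, u' i = (u' i).bmod Q₀) ∧ (∀ i, e i = (u' i).bmod p) ∧
      (∃ v : Fin n → ℤ, x' = fun i => (q : ℤ) * v i + (u' i - e i) / (p : ℤ)) then
    ((1 : ℝ) / (Q₀ : ℝ) ^ n) * gaussF n r (fun i => (x' i : ℝ)) /
      rhoCoset n r (q : ℤ) (fun i => (u' i - e i) / (p : ℤ))
  else 0

/-- Distribution 2 (the trapdoor-free simulation): sample `e` uniformly from the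
centered representatives `ℤ_pⁿ`, sample `x'` from `D_{ℤⁿ, r}`, and set
`u' = e + p·x' mod Q₀` (centered representative).
The resulting probability of the triple `(x', u', e)`. -/

noncomputable def Dist2 (n p q Q₀ : ℕ) (r : ℝ) (x' u' e : Fin n → ℤ) : ℝ :=
  if (∀ i, e i = (e i).bmod p) ∧ (∀ i, u' i = (e i + (p : ℤ) * x' i).bmod Q₀) then
    ((q : ℝ) ^ n / (Q₀ : ℝ) ^ n) * gaussF n r (fun i => (x' i : ℝ)) / rhoZn n r
  else 0


open Real

open Real


noncomputable def thSum (b : ℝ) : ℝ := ∑' n : ℤ, Real.exp (-π * b * (n : ℝ) ^ 2)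

lemma summable_gauss_shift {c : ℝ} (hc : 0 < c) (t : ℝ) :
    Summable fun n : ℤ => Real.exp (-c * ((n : ℝ) + t) ^ 2) := by
  have h := (summable_pow_mul_jacobiTheta₂_term_bound (c * |t| / π) (div_pos hc pi_pos) 0).mul_left
    (Real.exp (-c * t ^ 2))
  refine h.of_nonneg_of_le (fun n => (Real.exp_pos _).le) fun n => ?_
  rw [pow_zero, one_mul, ← Real.exp_add, Int.cast_abs]
  apply Real.exp_le_exp.2
  have h1 : -π * (c / π * (n : ℝ) ^ 2 - 2 * (c * |t| / π) * |(n : ℝ)|)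
      = -c * (n : ℝ) ^ 2 + 2 * c * (|t| * |(n : ℝ)|) := by
    field_simp
    ring
  rw [h1, ← abs_mul]
  nlinarith [neg_abs_le ((t : ℝ) * (n : ℝ)), abs_nonneg ((t : ℝ) * (n : ℝ))]

lemma summable_gauss {c : ℝ} (hc : 0 < c) :
    Summable fun n : ℤ => Real.exp (-c * (n : ℝ) ^ 2) := by
  simpa using summable_gauss_shift hc 0

lemma summable_gauss_cos {c : ℝ} (hc : 0 < c) (t : ℝ) :
    Summable fun n : ℤ => Real.exp (-c * (n : ℝ) ^ 2) * Real.cos (2 * π * t * n) := by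
  refine (summable_gauss hc).of_norm_bounded fun n => ?_
  rw [norm_mul, Real.norm_eq_abs, Real.norm_eq_abs, abs_of_pos (Real.exp_pos _)]
  calc Real.exp (-c * (n : ℝ) ^ 2) * |Real.cos (2 * π * t * n)|
      ≤ Real.exp (-c * (n : ℝ) ^ 2) * 1 :=
        mul_le_mul_of_nonneg_left (Real.abs_cos_le_one _) (Real.exp_pos _).le
    _ = _ := mul_one _

lemma poisson_shift {a : ℝ} (ha : 0 < a) (t : ℝ) :
    ∑' n : ℤ, Real.exp (-π / a * ((n : ℝ) + t) ^ 2)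
      = Real.sqrt a * ∑' n : ℤ, Real.exp (-π * a * (n : ℝ) ^ 2) * Real.cos (2 * π * t * n) := by
  have key := Complex.tsum_exp_neg_quadratic (a := (a : ℂ)) (by simpa using ha) (-(Complex.I) * t)
  have hIb : Complex.I * (-(Complex.I) * (t : ℂ)) = (t : ℂ) := by
    rw [← mul_assoc, mul_neg, Complex.I_mul_I]; ring
  rw [hIb] at key
  have hz : ∀ n : ℤ, (-(π:ℂ) * (a:ℂ) * (n : ℂ) ^ 2 + 2 * (π:ℂ) * (-(Complex.I) * (t:ℂ)) * (n:ℂ))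
      = ((-(π * a * (n:ℝ)^2) : ℝ) : ℂ) + ((-(2 * π * t * (n:ℝ)) : ℝ) : ℂ) * Complex.I := by
    intro n; push_cast; ring
  have hre : ∀ n : ℤ,
      (Complex.exp (-(π:ℂ) * (a:ℂ) * (n : ℂ) ^ 2 + 2 * (π:ℂ) * (-(Complex.I) * (t:ℂ)) * (n:ℂ))).re
      = Real.exp (-π * a * (n : ℝ) ^ 2) * Real.cos (2 * π * t * n) := by
    intro n
    rw [hz n, Complex.exp_re]
    simp only [Complex.add_re, Complex.ofReal_re, Complex.mul_I_re, Complex.ofReal_im, neg_zero,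
      add_zero, Complex.add_im, Complex.mul_I_im, Complex.ofReal_im, zero_add]
    rw [Real.cos_neg]
    ring_nf
  have hT1sum : Summable fun n : ℤ =>
      Complex.exp (-(π:ℂ) * (a:ℂ) * (n : ℂ) ^ 2 + 2 * (π:ℂ) * (-(Complex.I) * (t:ℂ)) * (n:ℂ)) := by
    apply Summable.of_norm
    have heq : ∀ n : ℤ,
        ‖Complex.exp (-(π:ℂ) * (a:ℂ) * (n : ℂ) ^ 2 + 2 * (π:ℂ) * (-(Complex.I) * (t:ℂ)) * (n:ℂ))‖
        = Real.exp (-(π * a) * (n : ℝ) ^ 2) := by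
      intro n
      rw [Complex.norm_exp, hz n]
      congr 1
      simp only [Complex.add_re, Complex.ofReal_re, Complex.mul_I_re, Complex.ofReal_im, neg_zero,
        add_zero]
      ring
    rw [funext heq]
    exact summable_gauss (by positivity)
  have hsa : ((Real.sqrt a : ℝ) : ℂ) ≠ 0 := by
    exact_mod_cast (Real.sqrt_pos.mpr ha).ne'
  have ha2 : ((a : ℂ)) ^ ((1:ℂ)/2) = ((Real.sqrt a : ℝ) : ℂ) := by
    rw [Real.sqrt_eq_rpow, Complex.ofReal_cpow ha.le]
    norm_num
  have hS2 : (∑' n : ℤ, Complex.exp (-(π:ℂ) / (a:ℂ) * ((n : ℂ) + (t:ℂ)) ^ 2))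
      = ((∑' n : ℤ, Real.exp (-π / a * ((n : ℝ) + t) ^ 2) : ℝ) : ℂ) := by
    rw [Complex.ofReal_tsum]
    refine tsum_congr fun n => ?_
    rw [Complex.ofReal_exp]
    congr 1
    push_cast
    ring
  rw [ha2, hS2] at key
  have key2 : ((∑' n : ℤ, Real.exp (-π / a * ((n : ℝ) + t) ^ 2) : ℝ) : ℂ)
      = ((Real.sqrt a : ℝ) : ℂ) * ∑' n : ℤ,
          Complex.exp (-(π:ℂ) * (a:ℂ) * (n : ℂ) ^ 2 + 2 * (π:ℂ) * (-(Complex.I) * (t:ℂ)) * (n:ℂ)) := by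
    rw [key]
    field_simp
  have hfin := congrArg Complex.re key2
  rw [Complex.ofReal_re, Complex.re_ofReal_mul, Complex.re_tsum hT1sum] at hfin
  rw [hfin]
  congr 1
  exact tsum_congr fun n => hre n







lemma summable_w {a : ℝ} (ha : 0 < a) : Summable fun n : ℤ => Real.exp (-π * a * (n : ℝ) ^ 2) := by
  have : ∀ n : ℤ, Real.exp (-π * a * (n : ℝ) ^ 2) = Real.exp (-(π * a) * (n : ℝ) ^ 2) := by
    intro n; ring_nf
  rw [funext this]
  exact summable_gauss (by positivity)

lemma thSum_ge_one {a : ℝ} (ha : 0 < a) : 1 ≤ thSum a := by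
  have h := (summable_w ha).le_tsum 0 (fun j _ => (Real.exp_pos _).le)
  unfold thSum
  simpa using h

lemma cos_sum_bounds {a : ℝ} (ha : 0 < a) (t : ℝ) :
    2 - thSum a ≤ (∑' n : ℤ, Real.exp (-π * a * (n : ℝ) ^ 2) * Real.cos (2 * π * t * n))
    ∧ (∑' n : ℤ, Real.exp (-π * a * (n : ℝ) ^ 2) * Real.cos (2 * π * t * n)) ≤ thSum a := by
  set w : ℤ → ℝ := fun n => Real.exp (-π * a * (n : ℝ) ^ 2) with hw
  set f : ℤ → ℝ := fun n => w n * Real.cos (2 * π * t * n) with hf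
  have hws : Summable w := summable_w ha
  have hfs : Summable f := by
    have : ∀ n : ℤ, f n = Real.exp (-(π * a) * (n : ℝ) ^ 2) * Real.cos (2 * π * t * n) := by
      intro n; simp only [hf, hw]; ring_nf
    rw [funext this]
    exact summable_gauss_cos (by positivity) t
  have hsplitf : (∑' n, f n) = f 0 + ∑' n : ℤ, if n = 0 then 0 else f n :=
    hfs.tsum_eq_add_tsum_ite 0
  have hsplitw : (∑' n, w n) = w 0 + ∑' n : ℤ, if n = 0 then 0 else w n :=
    hws.tsum_eq_add_tsum_ite 0
  have hf0 : f 0 = 1 := by simp [hf, hw]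
  have hw0 : w 0 = 1 := by simp [hw]
  have hwges : Summable fun n : ℤ => if n = 0 then 0 else w n :=
    hws.of_nonneg_of_le (fun n => by positivity) (fun n => by
      split
      · exact (Real.exp_pos _).le
      · exact le_rfl)
  have hwpos : ∀ n : ℤ, 0 < w n := fun n => Real.exp_pos _
  have hfges : Summable fun n : ℤ => if n = 0 then 0 else f n :=
    Summable.of_norm_bounded hwges (fun n => by
      by_cases h : n = 0
      · simp [h]
      · simp only [h, if_false, Real.norm_eq_abs]
        rw [hf]
        simp only []
        rw [abs_mul, abs_of_pos (hwpos n)]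
        exact mul_le_of_le_one_right (hwpos n).le (Real.abs_cos_le_one _))
  have hub : (∑' n : ℤ, if n = 0 then 0 else f n) ≤ ∑' n : ℤ, if n = 0 then 0 else w n := by
    refine hfges.tsum_le_tsum (fun n => ?_) hwges
    by_cases h : n = 0
    · simp [h]
    · simp only [h, if_false, hf]
      exact mul_le_of_le_one_right (hwpos n).le (Real.cos_le_one _)
  have hlb : -(∑' n : ℤ, if n = 0 then 0 else w n) ≤ (∑' n : ℤ, if n = 0 then 0 else f n) := by
    rw [← tsum_neg]
    refine hwges.neg.tsum_le_tsum (fun n => ?_) hfges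
    by_cases h : n = 0
    · simp [h]
    · simp only [h, if_false, hf]
      nlinarith [Real.neg_one_le_cos (2 * π * t * (n:ℝ)), hwpos n]
  have hthw : thSum a = ∑' n, w n := rfl
  constructor
  · rw [hsplitf, hf0, hthw, hsplitw, hw0]
    linarith
  · rw [hsplitf, hf0, hthw, hsplitw, hw0]
    linarith

lemma shifted_gauss_bounds {a : ℝ} (ha : 0 < a) (t : ℝ) :
    Real.sqrt a * (2 - thSum a) ≤ (∑' n : ℤ, Real.exp (-π / a * ((n : ℝ) + t) ^ 2))
    ∧ (∑' n : ℤ, Real.exp (-π / a * ((n : ℝ) + t) ^ 2)) ≤ Real.sqrt a * thSum a := by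
  rw [poisson_shift ha t]
  exact ⟨mul_le_mul_of_nonneg_left (cos_sum_bounds ha t).1 (Real.sqrt_nonneg a),
    mul_le_mul_of_nonneg_left (cos_sum_bounds ha t).2 (Real.sqrt_nonneg a)⟩



lemma hasSum_pi_prod : ∀ {n : ℕ} (f : Fin n → ℤ → ℝ), (∀ i, Summable (f i)) →
    (∀ i x, 0 ≤ f i x) →
    HasSum (fun z : Fin n → ℤ => ∏ i, f i (z i)) (∏ i, ∑' x, f i x) := by
  intro n
  induction n with
  | zero =>
    intro f _ _
    simp only [Finset.univ_eq_empty, Finset.prod_empty]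
    exact hasSum_single (default : Fin 0 → ℤ) (fun b hb => absurd (Subsingleton.elim b default) hb)
  | succ m ih =>
    intro f hs h0
    set g : (Fin m → ℤ) → ℝ := fun z => ∏ i : Fin m, f i.succ (z i) with hg
    have hIH : HasSum g (∏ i : Fin m, ∑' x, f i.succ x) :=
      ih (fun i => f i.succ) (fun i => hs i.succ) (fun i => h0 i.succ)
    have hgnn : ∀ z, 0 ≤ g z := fun z => Finset.prod_nonneg fun i _ => h0 i.succ (z i)
    have hsum2 : Summable (fun x : ℤ × (Fin m → ℤ) => f 0 x.1 * g x.2) :=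
      Summable.mul_of_nonneg (hs 0) hIH.summable (fun x => h0 0 x) hgnn
    have hmul : HasSum (fun x : ℤ × (Fin m → ℤ) => f 0 x.1 * g x.2)
        ((∑' x, f 0 x) * ∏ i : Fin m, ∑' x, f i.succ x) :=
      HasSum.mul (hs 0).hasSum hIH hsum2
    have heq : (fun x : ℤ × (Fin m → ℤ) => f 0 x.1 * g x.2)
        = (fun z : Fin (m+1) → ℤ => ∏ i, f i (z i)) ∘ (Fin.consEquiv (fun _ : Fin (m+1) => ℤ)) := by
      funext x
      simp only [hg, Function.comp_apply, Fin.prod_univ_succ,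
        Fin.cons_zero, Fin.cons_succ, Fin.consEquiv_apply]
    rw [heq] at hmul
    have := ((Fin.consEquiv (fun _ : Fin (m+1) => ℤ)).hasSum_iff).mp hmul
    rw [Fin.prod_univ_succ]
    exact this

lemma gaussF_prod (n : ℕ) (s : ℝ) (x : Fin n → ℝ) :
    gaussF n s x = ∏ i, Real.exp (-π * (x i) ^ 2 / s ^ 2) := by
  rw [gaussF, ← Real.exp_sum]
  congr 1
  rw [← Finset.sum_div, ← Finset.mul_sum]

lemma rhoZn_eq (n : ℕ) (s : ℝ) (h : Summable fun z : ℤ => Real.exp (-π * (z : ℝ) ^ 2 / s ^ 2)) :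
    rhoZn n s = (∑' z : ℤ, Real.exp (-π * (z : ℝ) ^ 2 / s ^ 2)) ^ n := by
  have hps := hasSum_pi_prod (fun _ : Fin n => fun z : ℤ => Real.exp (-π * (z : ℝ) ^ 2 / s ^ 2))
    (fun _ => h) (fun _ x => (Real.exp_pos _).le)
  simp only [Finset.prod_const, Finset.card_univ, Fintype.card_fin] at hps
  rw [rhoZn, ← hps.tsum_eq]
  exact tsum_congr fun z => gaussF_prod n s _

lemma rhoCoset_eq (n : ℕ) (s : ℝ) (q : ℤ) (c : Fin n → ℤ) (h : ∀ i, Summable fun z : ℤ =>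
    Real.exp (-π * ((q * z + c i : ℤ) : ℝ) ^ 2 / s ^ 2)) :
    rhoCoset n s q c = ∏ i, ∑' z : ℤ, Real.exp (-π * ((q * z + c i : ℤ) : ℝ) ^ 2 / s ^ 2) := by
  have := hasSum_pi_prod (fun i z => Real.exp (-π * ((q * z + c i : ℤ) : ℝ) ^ 2 / s ^ 2))
    h (fun i x => (Real.exp_pos _).le)
  rw [rhoCoset]
  rw [← this.tsum_eq]
  exact tsum_congr fun z => gaussF_prod n s _


lemma bmod_congr {a b : ℤ} (m : ℕ) (h : a % (m : ℤ) = b % (m : ℤ)) : a.bmod m = b.bmod m := by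
  rw [Int.bmod_def, Int.bmod_def, h]

lemma bmod_bmod_of_dvd (a : ℤ) (p q : ℕ) : (a.bmod (p * q)).bmod p = a.bmod p := by
  apply bmod_congr
  have h1 : (a.bmod (p * q)) % ((p : ℤ) * (q : ℤ)) = a % ((p : ℤ) * (q : ℤ)) := by
    have := Int.bmod_emod (x := a) (m := p * q)
    push_cast at this ⊢
    exact this
  have h2 : (a.bmod (p * q)) % (p : ℤ) = (a.bmod (p * q)) % ((p:ℤ) * (q:ℤ)) % (p : ℤ) :=
    (Int.emod_emod_of_dvd _ ⟨(q:ℤ), rfl⟩).symm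
  rw [h2, h1, Int.emod_emod_of_dvd _ ⟨(q:ℤ), rfl⟩]

lemma bmod_dvd_sub (y : ℤ) (m : ℕ) : (m : ℤ) ∣ (y.bmod m - y) := by
  apply Int.dvd_of_emod_eq_zero
  rw [Int.sub_emod, Int.bmod_emod, sub_self, Int.zero_emod]

theorem cond_equiv (n p q Q₀ : ℕ) (hp : 0 < p) (hQ₀ : Q₀ = p * q)
    (x' u' e : Fin n → ℤ) :
    ((∀ i, u' i = (u' i).bmod Q₀) ∧ (∀ i, e i = (u' i).bmod p) ∧
      (∃ v : Fin n → ℤ, x' = fun i => (q : ℤ) * v i + (u' i - e i) / (p : ℤ)))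
    ↔ ((∀ i, e i = (e i).bmod p) ∧ ∀ i, u' i = (e i + (p : ℤ) * x' i).bmod Q₀) := by
  have hpz : (p : ℤ) ≠ 0 := by exact_mod_cast hp.ne'
  constructor
  · rintro ⟨hu, he, v, hx⟩
    constructor
    · intro i
      rw [he i, Int.bmod_bmod]
    · intro i
      have hdvd : (p : ℤ) ∣ (u' i - e i) := by
        apply Int.dvd_of_emod_eq_zero
        rw [Int.sub_emod, he i, Int.bmod_emod, sub_self, Int.zero_emod]
      have hxe : (p : ℤ) * x' i = (p : ℤ) * (q : ℤ) * v i + (u' i - e i) := by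
        rw [hx]
        simp only []
        rw [mul_add, Int.mul_ediv_cancel' hdvd]
        ring
      have : e i + (p : ℤ) * x' i = u' i + (Q₀ : ℤ) * v i := by
        rw [hxe, hQ₀]; push_cast; ring
      rw [this, Int.add_mul_bmod_self_left, ← hu i]
  · rintro ⟨he, hu⟩
    have hkey : ∀ i, ∃ k : ℤ, u' i = e i + (p : ℤ) * x' i + (Q₀ : ℤ) * k := by
      intro i
      obtain ⟨k, hk⟩ := bmod_dvd_sub (e i + (p : ℤ) * x' i) Q₀
      exact ⟨k, by rw [hu i]; linarith [hk]⟩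
    choose k hk using hkey
    refine ⟨fun i => ?_, fun i => ?_, ⟨fun i => -(k i), ?_⟩⟩
    · rw [hu i]
      exact (Int.bmod_bmod).symm
    · rw [hu i, hQ₀, bmod_bmod_of_dvd, Int.add_mul_bmod_self_left]
      exact he i
    · funext i
      have h1 : u' i - e i = (p : ℤ) * (x' i + (q : ℤ) * k i) := by
        rw [hk i, hQ₀]; push_cast; ring
      rw [h1, Int.mul_ediv_cancel_left _ hpz]
      ring

lemma summable_shift' {a : ℝ} (ha : 0 < a) (t : ℝ) :
    Summable fun n : ℤ => Real.exp (-π / a * ((n : ℝ) + t) ^ 2) := by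
  have h := summable_gauss_shift (div_pos pi_pos ha) t
  refine h.congr fun n => ?_
  rw [neg_div]

lemma summable_gsq {s : ℝ} (hs : 0 < s) :
    Summable fun z : ℤ => Real.exp (-π * (z : ℝ) ^ 2 / s ^ 2) := by
  have h := summable_gauss (c := π / s ^ 2) (by positivity)
  refine h.congr fun n => ?_
  congr 1
  field_simp

lemma thSum_mono {a b : ℝ} (hb : 0 < b) (hab : b ≤ a) : thSum a ≤ thSum b := by
  refine (summable_w (lt_of_lt_of_le hb hab)).tsum_le_tsum (fun n => ?_) (summable_w hb)
  apply Real.exp_le_exp.2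
  nlinarith [mul_nonneg (sub_nonneg.2 hab) (mul_nonneg Real.pi_pos.le (sq_nonneg ((n : ℝ))))]

lemma helper1 {a b G Qn C Z qn : ℝ} (hG : 0 < G) (hQn : 0 < Qn) (hC : 0 < C) (hZ : 0 < Z)
    (hb : 0 < b) (hqn : 0 < qn) (hkey : a * (qn * C) ≤ b * Z) :
    a / b * (qn / Qn * G / Z) ≤ 1 / Qn * G / C := by
  have hb' := hb.ne'
  have hQn' := hQn.ne'
  have hC' := hC.ne'
  have hZ' := hZ.ne'
  rw [show a / b * (qn / Qn * G / Z) = (a * qn * G) / (b * (Qn * Z)) by field_simp,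
      show (1 : ℝ) / Qn * G / C = G / (Qn * C) by field_simp]
  rw [div_le_div_iff₀ (by positivity) (by positivity)]
  nlinarith [mul_le_mul_of_nonneg_left hkey (mul_nonneg hG.le hQn.le)]

lemma helper2 {u v G Qn C Z qn : ℝ} (hG : 0 < G) (hQn : 0 < Qn) (hC : 0 < C) (hZ : 0 < Z)
    (hu : 0 < u) (hqn : 0 < qn) (hkey : u * Z ≤ v * (qn * C)) :
    1 / Qn * G / C ≤ v / u * (qn / Qn * G / Z) := by
  have hu' := hu.ne'
  have hQn' := hQn.ne'
  have hC' := hC.ne'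
  have hZ' := hZ.ne'
  rw [show v / u * (qn / Qn * G / Z) = (v * qn * G) / (u * (Qn * Z)) by field_simp,
      show (1 : ℝ) / Qn * G / C = G / (Qn * C) by field_simp]
  rw [div_le_div_iff₀ (by positivity) (by positivity)]
  nlinarith [mul_le_mul_of_nonneg_left hkey (mul_nonneg hG.le hQn.le)]

lemma F_eq {q : ℕ} (hq : 0 < q) {r : ℝ} (hr : 0 < r) (c : ℤ) :
    (fun z : ℤ => Real.exp (-π * ((((q : ℕ) : ℤ) * z + c : ℤ) : ℝ) ^ 2 / r ^ 2))
      = fun z : ℤ => Real.exp (-π / (r ^ 2 / (q : ℝ) ^ 2) * ((z : ℝ) + (c : ℝ) / (q : ℝ)) ^ 2) := by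
  funext z
  congr 1
  have hq' : ((q : ℝ)) ≠ 0 := by positivity
  have hr' : r ≠ 0 := hr.ne'
  push_cast
  field_simp


/-- **Simulatability of the semi-random gadget sampler** (instantiation
`P = p·I_n`, `Q = q·I_n`, `Q₀ = p·q`).  If `r ≥ η_ε(q·ℤⁿ)`, i.e.
`ρ_{q/r}(ℤⁿ) ≤ 1 + ε`, then the two distributions on triples `(x', u', e)` have
the same support `{(x', u', e) : u' = e + p·x' mod Q₀}` (with `e ∈ ℤ_pⁿ`,
`u' ∈ ℤ_{Q₀}ⁿ` centered), and on every triple the probability under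
Distribution 1 is within a factor `[(1-ε)/(1+ε), (1+ε)/(1-ε)]` of the
probability under Distribution 2. -/
theorem stmt_2 (n : ℕ) (hn : 1 ≤ n) (p q : ℕ) (hp : 0 < p) (hq : 0 < q)
    (Q₀ : ℕ) (hQ₀ : Q₀ = p * q) (ε r : ℝ) (hε : ε ∈ Set.Ioo (0 : ℝ) (1/2)) (hr : 0 < r)
    (hsmooth : rhoZn n ((q : ℝ) / r) ≤ 1 + ε) :
    (∀ x' u' e : Fin n → ℤ,
        (Dist1 n p q Q₀ r x' u' e ≠ 0 ↔
          ((∀ i, e i = (e i).bmod p) ∧ ∀ i, u' i = (e i + (p : ℤ) * x' i).bmod Q₀))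
      ∧ (Dist2 n p q Q₀ r x' u' e ≠ 0 ↔
          ((∀ i, e i = (e i).bmod p) ∧ ∀ i, u' i = (e i + (p : ℤ) * x' i).bmod Q₀)))
    ∧ (∀ x' u' e : Fin n → ℤ,
        (1 - ε)/(1 + ε) * Dist2 n p q Q₀ r x' u' e ≤ Dist1 n p q Q₀ r x' u' e
      ∧ Dist1 n p q Q₀ r x' u' e ≤ (1 + ε)/(1 - ε) * Dist2 n p q Q₀ r x' u' e) := by
  obtain ⟨hε0, hε1⟩ := hε
  have hε1' : ε < 1 / 2 := hε1
  have hq' : (0:ℝ) < (q:ℝ) := by exact_mod_cast hq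
  have hn0 : n ≠ 0 := by omega
  have hQ0 : 0 < Q₀ := by rw [hQ₀]; positivity
  have hQ0' : (0:ℝ) < (Q₀:ℝ) := by exact_mod_cast hQ0
  set θ : ℝ := thSum (r ^ 2 / (q:ℝ) ^ 2) with hθdef
  have ha : (0:ℝ) < r ^ 2 / (q:ℝ) ^ 2 := by positivity
  have hθ1 : 1 ≤ θ := thSum_ge_one ha
  have hsum_qr : Summable fun z : ℤ => Real.exp (-π * (z:ℝ) ^ 2 / ((q:ℝ)/r) ^ 2) :=
    summable_gsq (by positivity)
  have htheta_eq : (∑' z : ℤ, Real.exp (-π * (z:ℝ) ^ 2 / ((q:ℝ)/r) ^ 2)) = θ := by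
    rw [hθdef, thSum]
    refine tsum_congr fun z => ?_
    congr 1
    have : r ≠ 0 := hr.ne'
    have : (q:ℝ) ≠ 0 := hq'.ne'
    field_simp
  have hθn : θ ^ n ≤ 1 + ε := by
    calc θ ^ n = rhoZn n ((q:ℝ)/r) := by rw [rhoZn_eq n _ hsum_qr, htheta_eq]
      _ ≤ 1 + ε := hsmooth
  have hθub : θ ≤ 1 + ε := le_trans (le_self_pow₀ hθ1 hn0) hθn
  have hθ2 : 2 - θ > 0 := by linarith
  have hconv : 1 - ε ≤ (2 - θ) ^ n := by
    have h := (convexOn_pow n).2 (Set.mem_Ici.mpr (by linarith : (0:ℝ) ≤ 2 - θ))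
      (Set.mem_Ici.mpr (by linarith : (0:ℝ) ≤ θ)) (by norm_num : (0:ℝ) ≤ 1/2)
      (by norm_num : (0:ℝ) ≤ 1/2) (by norm_num : (1/2 : ℝ) + 1/2 = 1)
    rw [smul_eq_mul, smul_eq_mul, smul_eq_mul, smul_eq_mul] at h
    rw [show (1/2 : ℝ) * (2 - θ) + 1/2 * θ = 1 by ring] at h
    have h' : (1:ℝ) ≤ 1/2 * (2 - θ) ^ n + 1/2 * θ ^ n := by simpa using h
    linarith
  have hsqrt : Real.sqrt (r ^ 2 / (q:ℝ) ^ 2) = r / q := by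
    rw [show r ^ 2 / (q:ℝ) ^ 2 = (r / q) ^ 2 by ring, Real.sqrt_sq (by positivity)]
  set F : ℤ → ℝ := fun c0 => ∑' z : ℤ,
    Real.exp (-π * ((((q:ℕ):ℤ) * z + c0 : ℤ) : ℝ) ^ 2 / r ^ 2) with hFdef
  have hF : ∀ c : ℤ, (r/q) * (2 - θ) ≤ F c ∧ F c ≤ (r/q) * θ := by
    intro c
    rw [hFdef]
    simp only []
    rw [F_eq hq hr c]
    have h := shifted_gauss_bounds ha ((c:ℝ)/(q:ℝ))
    rw [hsqrt] at h
    exact h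
  have hFsummable : ∀ c : ℤ, Summable fun z : ℤ =>
      Real.exp (-π * ((((q:ℕ):ℤ) * z + c : ℤ) : ℝ) ^ 2 / r ^ 2) := by
    intro c
    rw [F_eq hq hr c]
    exact summable_shift' ha _
  have hlbnn : (0:ℝ) ≤ (r/q) * (2 - θ) := mul_nonneg (by positivity) (by linarith)
  have hqpow : ∀ X : ℝ, (q:ℝ) ^ n * ((r/q) * X) ^ n = (r * X) ^ n := by
    intro X
    rw [← mul_pow]
    congr 1
    field_simp
  have hCoset : ∀ c : Fin n → ℤ,
      r ^ n * (1 - ε) ≤ (q:ℝ) ^ n * rhoCoset n r (q:ℤ) c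
      ∧ (q:ℝ) ^ n * rhoCoset n r (q:ℤ) c ≤ r ^ n * (1 + ε) := by
    intro c
    have hre : rhoCoset n r (q:ℤ) c = ∏ i, F (c i) :=
      rhoCoset_eq n r (q:ℤ) c (fun i => hFsummable (c i))
    have hp1 : ((r/q) * (2 - θ)) ^ n ≤ ∏ i, F (c i) := by
      calc ((r/q) * (2 - θ)) ^ n = ∏ _i : Fin n, ((r/q) * (2 - θ)) := by
            simp [Finset.prod_const]
        _ ≤ ∏ i, F (c i) :=
            Finset.prod_le_prod (fun i _ => hlbnn) (fun i _ => (hF (c i)).1)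
    have hp2 : (∏ i, F (c i)) ≤ ((r/q) * θ) ^ n := by
      calc (∏ i, F (c i)) ≤ ∏ _i : Fin n, ((r/q) * θ) :=
            Finset.prod_le_prod (fun i _ => le_trans hlbnn (hF (c i)).1) (fun i _ => (hF (c i)).2)
        _ = ((r/q) * θ) ^ n := by simp [Finset.prod_const]
    constructor
    · have h1 : (q:ℝ) ^ n * ((r/q) * (2 - θ)) ^ n ≤ (q:ℝ) ^ n * rhoCoset n r (q:ℤ) c := by
        rw [hre]
        exact mul_le_mul_of_nonneg_left hp1 (by positivity)
      rw [hqpow] at h1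
      refine le_trans ?_ h1
      rw [mul_pow]
      exact mul_le_mul_of_nonneg_left hconv (by positivity)
    · have h2 : (q:ℝ) ^ n * rhoCoset n r (q:ℤ) c ≤ (q:ℝ) ^ n * ((r/q) * θ) ^ n := by
        rw [hre]
        exact mul_le_mul_of_nonneg_left hp2 (by positivity)
      rw [hqpow] at h2
      refine le_trans h2 ?_
      rw [mul_pow]
      exact mul_le_mul_of_nonneg_left hθn (by positivity)
  have hrho1 : r * (2 - θ) ≤ (∑' z : ℤ, Real.exp (-π * (z:ℝ) ^ 2 / r ^ 2))
      ∧ (∑' z : ℤ, Real.exp (-π * (z:ℝ) ^ 2 / r ^ 2)) ≤ r * θ := by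
    have hb2 : (0:ℝ) < r ^ 2 := by positivity
    have heq : (fun z : ℤ => Real.exp (-π * (z:ℝ) ^ 2 / r ^ 2))
        = fun z : ℤ => Real.exp (-π / r ^ 2 * ((z:ℝ) + 0) ^ 2) := by
      funext z
      congr 1
      ring
    have h := shifted_gauss_bounds hb2 (0:ℝ)
    rw [Real.sqrt_sq hr.le] at h
    have hmono : thSum (r ^ 2) ≤ θ := by
      refine thSum_mono ha ?_
      rw [div_le_iff₀ (by positivity)]
      have hq1 : (1:ℝ) ≤ (q:ℝ) := by exact_mod_cast hq
      nlinarith [sq_nonneg r, hq1, mul_nonneg (sq_nonneg r) (mul_nonneg (sub_nonneg.2 hq1) (by linarith : (0:ℝ) ≤ (q:ℝ) + 1))]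
    rw [heq]
    constructor
    · refine le_trans ?_ h.1
      nlinarith [mul_nonneg hr.le (sub_nonneg.2 hmono)]
    · refine le_trans h.2 ?_
      nlinarith [mul_nonneg hr.le (sub_nonneg.2 hmono)]
  have hZb : r ^ n * (1 - ε) ≤ rhoZn n r ∧ rhoZn n r ≤ r ^ n * (1 + ε) := by
    have hre : rhoZn n r = (∑' z : ℤ, Real.exp (-π * (z:ℝ) ^ 2 / r ^ 2)) ^ n :=
      rhoZn_eq n r (summable_gsq hr)
    constructor
    · rw [hre]
      calc r ^ n * (1 - ε) ≤ r ^ n * (2 - θ) ^ n := mul_le_mul_of_nonneg_left hconv (by positivity)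
        _ = (r * (2 - θ)) ^ n := (mul_pow r (2 - θ) n).symm
        _ ≤ _ := pow_le_pow_left₀ (mul_nonneg hr.le (by linarith)) hrho1.1 n
    · rw [hre]
      calc (∑' z : ℤ, Real.exp (-π * (z:ℝ) ^ 2 / r ^ 2)) ^ n ≤ (r * θ) ^ n :=
            pow_le_pow_left₀ (le_trans (mul_nonneg hr.le (by linarith)) hrho1.1) hrho1.2 n
        _ = r ^ n * θ ^ n := mul_pow r θ n
        _ ≤ r ^ n * (1 + ε) := mul_le_mul_of_nonneg_left hθn (by positivity)
  have hLpos : (0:ℝ) < r ^ n * (1 - ε) := mul_pos (by positivity) (by linarith)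
  have hCpos : ∀ c : Fin n → ℤ, 0 < rhoCoset n r (q:ℤ) c := by
    intro c
    by_contra hcon
    have h2 : (q:ℝ) ^ n * rhoCoset n r (q:ℤ) c ≤ 0 :=
      mul_nonpos_of_nonneg_of_nonpos (by positivity) (not_lt.mp hcon)
    linarith [(hCoset c).1]
  have hZpos : 0 < rhoZn n r := lt_of_lt_of_le hLpos hZb.1
  constructor
  · intro x' u' e
    constructor
    · rw [Dist1]
      by_cases hD : (∀ i, u' i = (u' i).bmod Q₀) ∧ (∀ i, e i = (u' i).bmod p) ∧
          (∃ v : Fin n → ℤ, x' = fun i => (q : ℤ) * v i + (u' i - e i) / (p : ℤ))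
      · rw [if_pos hD]
        have hval : (0:ℝ) < ((1 : ℝ) / (Q₀ : ℝ) ^ n) * gaussF n r (fun i => (x' i : ℝ)) /
            rhoCoset n r (q : ℤ) (fun i => (u' i - e i) / (p : ℤ)) := by
          apply div_pos _ (hCpos _)
          apply mul_pos (by positivity)
          exact Real.exp_pos _
        exact ⟨fun _ => (cond_equiv n p q Q₀ hp hQ₀ x' u' e).mp hD, fun _ => hval.ne'⟩
      · rw [if_neg hD]
        simp only [ne_eq, not_true_eq_false, false_iff, iff_false]
        exact fun hC2 => hD ((cond_equiv n p q Q₀ hp hQ₀ x' u' e).mpr hC2)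
    · rw [Dist2]
      by_cases hC : (∀ i, e i = (e i).bmod p) ∧ (∀ i, u' i = (e i + (p : ℤ) * x' i).bmod Q₀)
      · rw [if_pos hC]
        have hval : (0:ℝ) < ((q : ℝ) ^ n / (Q₀ : ℝ) ^ n) * gaussF n r (fun i => (x' i : ℝ)) /
            rhoZn n r := by
          apply div_pos _ hZpos
          apply mul_pos (by positivity)
          exact Real.exp_pos _
        exact ⟨fun _ => hC, fun _ => hval.ne'⟩
      · rw [if_neg hC]
        simp only [ne_eq, not_true_eq_false, false_iff, iff_false]
        exact hC
  · intro x' u' e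
    by_cases hC : (∀ i, e i = (e i).bmod p) ∧ (∀ i, u' i = (e i + (p : ℤ) * x' i).bmod Q₀)
    · have hD := (cond_equiv n p q Q₀ hp hQ₀ x' u' e).mpr hC
      rw [Dist1, Dist2, if_pos hD, if_pos hC]
      set G : ℝ := gaussF n r (fun i => (x' i : ℝ)) with hGdef
      have hG : 0 < G := Real.exp_pos _
      set C : ℝ := rhoCoset n r (q : ℤ) (fun i => (u' i - e i) / (p : ℤ)) with hCdef
      have hC0 : 0 < C := hCpos _
      have hCb := hCoset (fun i => (u' i - e i) / (p : ℤ))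
      rw [← hCdef] at hCb
      constructor
      · refine helper1 hG (by positivity) hC0 hZpos (by linarith) (by positivity) ?_
        calc (1 - ε) * ((q:ℝ) ^ n * C) ≤ (1 - ε) * (r ^ n * (1 + ε)) := by
              exact mul_le_mul_of_nonneg_left hCb.2 (by linarith)
          _ = (1 + ε) * (r ^ n * (1 - ε)) := by ring
          _ ≤ (1 + ε) * rhoZn n r := mul_le_mul_of_nonneg_left hZb.1 (by linarith)
      · refine helper2 hG (by positivity) hC0 hZpos (by linarith) (by positivity) ?_
        calc (1 - ε) * rhoZn n r ≤ (1 - ε) * (r ^ n * (1 + ε)) :=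
              mul_le_mul_of_nonneg_left hZb.2 (by linarith)
          _ = (1 + ε) * (r ^ n * (1 - ε)) := by ring
          _ ≤ (1 + ε) * ((q:ℝ) ^ n * C) := mul_le_mul_of_nonneg_left hCb.1 (by linarith)
    · have hD : ¬((∀ i, u' i = (u' i).bmod Q₀) ∧ (∀ i, e i = (u' i).bmod p) ∧
          (∃ v : Fin n → ℤ, x' = fun i => (q : ℤ) * v i + (u' i - e i) / (p : ℤ))) :=
        fun h => hC ((cond_equiv n p q Q₀ hp hQ₀ x' u' e).mp h)
      rw [Dist1, Dist2, if_neg hD, if_neg hC]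
      norm_num
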